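/- The number of signed permutations in B_n that are \bar{1}\bar{2}-avoiding and have at most k barred entries equals sum over i from 0 to min(k,n) of binom(n,i)^2 * (n-i)!. -/

import Mathlib

open Finset

variable {n : ℕ}

def DecOn (σ : Equiv.Perm (Fin n)) (S : Finset (Fin n)) : Prop :=
  ∀ i j : Fin n, i ∈ S → j ∈ S → i < j → σ j < σ i

instance (σ : Equiv.Perm (Fin n)) (S : Finset (Fin n)) : Decidable (DecOn σ S) := by
  unfold DecOn; infer_instance

section raw
variable (S T : Finset (Fin n)) (hST : T.card = S.card)
  (g : {x : Fin n // x ∉ S} ≃ {x : Fin n // x ∉ T})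

def rawFun : Fin n → Fin n := fun x =>
  if h : x ∈ S then (T.orderEmbOfFin hST) (Fin.rev ((S.orderIsoOfFin rfl).symm ⟨x, h⟩))
  else (g ⟨x, h⟩ : Fin n)

lemma rawFun_mem {x : Fin n} (h : x ∈ S) : rawFun S T hST g x ∈ T := by
  simp [rawFun, dif_pos h]

lemma rawFun_not_mem {x : Fin n} (h : x ∉ S) : rawFun S T hST g x ∉ T := by
  simp only [rawFun, dif_neg h]
  exact (g ⟨x, h⟩).2

lemma rawFun_injective : Function.Injective (rawFun S T hST g) := by
  intro a b hab
  by_cases ha : a ∈ S <;> by_cases hb : b ∈ S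
  · simp only [rawFun, dif_pos ha, dif_pos hb] at hab
    have h1 := (T.orderEmbOfFin hST).injective hab
    have h2 := Fin.rev_injective h1
    have h3 := (S.orderIsoOfFin rfl).symm.injective h2
    simpa using congrArg (Subtype.val) h3
  · exact absurd (hab ▸ rawFun_mem S T hST g ha) (rawFun_not_mem S T hST g hb)
  · exact absurd (hab.symm ▸ rawFun_mem S T hST g hb) (rawFun_not_mem S T hST g ha)
  · simp only [rawFun, dif_neg ha, dif_neg hb] at hab
    have := g.injective (Subtype.ext hab)
    simpa using congrArg (Subtype.val) this

noncomputable def mkPerm : Equiv.Perm (Fin n) :=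
  Equiv.ofBijective _ (Finite.injective_iff_bijective.mp (rawFun_injective S T hST g))

lemma mkPerm_apply (x : Fin n) : mkPerm S T hST g x = rawFun S T hST g x := rfl

lemma mkPerm_decOn : DecOn (mkPerm S T hST g) S := by
  intro i j hi hj hij
  rw [mkPerm_apply, mkPerm_apply]
  simp only [rawFun, dif_pos hi, dif_pos hj]
  apply (T.orderEmbOfFin hST).strictMono
  rw [Fin.rev_lt_rev]
  exact (S.orderIsoOfFin rfl).symm.strictMono (by exact hij)

lemma mkPerm_image : S.image (mkPerm S T hST g) = T := by
  apply eq_of_subset_of_card_le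
  · intro y hy
    obtain ⟨x, hx, rfl⟩ := mem_image.mp hy
    exact rawFun_mem S T hST g hx
  · rw [card_image_of_injective _ (mkPerm S T hST g).injective, hST]

end raw

noncomputable def fiberEquiv (S T : Finset (Fin n)) (hST : T.card = S.card) :
    {σ : Equiv.Perm (Fin n) // DecOn σ S ∧ S.image ⇑σ = T} ≃
      ({x : Fin n // x ∉ S} ≃ {x : Fin n // x ∉ T}) where
  toFun p :=
    { toFun := fun x => ⟨p.1 x, by
        intro hmem
        have hmem' : (p.1 : Equiv.Perm (Fin n)) ↑x ∈ S.image ⇑p.1 := by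
          rw [p.2.2]; exact hmem
        obtain ⟨a, ha, hax⟩ := mem_image.mp hmem'
        exact x.2 (by rwa [p.1.injective hax] at ha)⟩
      invFun := fun y => ⟨p.1.symm y, by
        intro hmem
        have : p.1 (p.1.symm y) ∈ S.image p.1 := mem_image_of_mem _ hmem
        rw [p.2.2, p.1.apply_symm_apply] at this
        exact y.2 this⟩
      left_inv := fun x => by simp
      right_inv := fun y => by simp }
  invFun g := ⟨mkPerm S T hST g, mkPerm_decOn S T hST g, mkPerm_image S T hST g⟩
  left_inv := by
    rintro ⟨σ, hdec, himg⟩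
    apply Subtype.ext
    apply Equiv.ext
    intro x
    rw [mkPerm_apply]
    by_cases h : x ∈ S
    · have key : (fun j : Fin S.card => σ (S.orderEmbOfFin rfl (Fin.rev j))) =
          ⇑(T.orderEmbOfFin hST) := by
        apply Finset.orderEmbOfFin_unique
        · intro j
          rw [← himg]
          exact mem_image_of_mem _ (orderEmbOfFin_mem _ _ _)
        · intro j j' hjj'
          exact hdec _ _ (orderEmbOfFin_mem _ _ _) (orderEmbOfFin_mem _ _ _)
            ((S.orderEmbOfFin rfl).strictMono (Fin.rev_lt_rev.mpr hjj'))
      have := congrFun key (Fin.rev ((S.orderIsoOfFin rfl).symm ⟨x, h⟩))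
      simp only [Fin.rev_rev] at this
      have hx : S.orderEmbOfFin rfl ((S.orderIsoOfFin rfl).symm ⟨x, h⟩) = x := by
        rw [← Finset.coe_orderIsoOfFin_apply]
        simp
      rw [hx] at this
      simp only [rawFun, dif_pos h]
      exact this.symm
    · simp only [rawFun, dif_neg h]
      rfl
  right_inv := by
    intro g
    apply Equiv.ext
    rintro ⟨x, hx⟩
    apply Subtype.ext
    simp only [Equiv.coe_fn_mk]
    rw [mkPerm_apply]
    simp [rawFun, dif_neg hx]

lemma card_fiber (S T : Finset (Fin n)) (hST : T.card = S.card) :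
    Fintype.card {σ : Equiv.Perm (Fin n) // DecOn σ S ∧ S.image ⇑σ = T} =
      (n - S.card).factorial := by
  rw [Fintype.card_congr (fiberEquiv S T hST)]
  have h1 : Fintype.card {x : Fin n // x ∉ S} = n - S.card := by
    rw [Fintype.card_subtype_compl]
    simp
  have h2 : Fintype.card {x : Fin n // x ∉ T} = n - S.card := by
    rw [Fintype.card_subtype_compl]
    simp [hST]
  rw [Fintype.card_equiv (Fintype.equivOfCardEq (h1.trans h2.symm)), h1]

lemma card_decOn (S : Finset (Fin n)) :
    (univ.filter fun σ : Equiv.Perm (Fin n) => DecOn σ S).card =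
      n.choose S.card * (n - S.card).factorial := by
  rw [card_eq_sum_card_fiberwise (f := fun σ : Equiv.Perm (Fin n) => S.image ⇑σ)
    (t := Finset.powersetCard S.card univ)
    (fun σ _ => mem_powersetCard.mpr ⟨subset_univ _,
      card_image_of_injective _ σ.injective⟩)]
  have hconst : ∀ T ∈ Finset.powersetCard S.card univ,
      ((univ.filter fun σ : Equiv.Perm (Fin n) => DecOn σ S).filter
        fun σ : Equiv.Perm (Fin n) => S.image ⇑σ = T).card = (n - S.card).factorial := by
    intro T hT
    have hTc : T.card = S.card := (mem_powersetCard.mp hT).2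
    rw [filter_filter]
    calc (univ.filter fun σ : Equiv.Perm (Fin n) => DecOn σ S ∧ Finset.image (⇑σ) S = T).card
        = Fintype.card {σ : Equiv.Perm (Fin n) // DecOn σ S ∧ S.image ⇑σ = T} :=
          (Fintype.card_subtype _).symm
      _ = (n - S.card).factorial := card_fiber S T hTc
  rw [Finset.sum_congr rfl hconst, Finset.sum_const, smul_eq_mul,
    Finset.card_powersetCard]
  simp

/-- A signed permutation of `{±1, …, ±n}` is encoded as a pair `(σ, ε)` where `σ ∈ S_n` gives the
absolute values `|b_i| = σ(i)` and `ε i = true` means the `i`-th entry is barred (negative).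

The claim: the number of `1̄2̄`-avoiding signed permutations in `B_n` (barred absolute values
strictly decreasing from left to right) with at most `k` barred entries is
`∑_{i=0}^{min(k,n)} (n choose i)² (n-i)!`. -/
theorem card_bar12_avoiding_at_most_k_bars (n k : ℕ) :
    Nat.card {p : Equiv.Perm (Fin n) × (Fin n → Bool) //
        (∀ i j : Fin n, i < j → p.2 i = true → p.2 j = true → p.1 j < p.1 i) ∧
        (Finset.univ.filter fun i => p.2 i = true).card ≤ k} =
      ∑ i ∈ Finset.range (min k n + 1), n.choose i ^ 2 * (n - i).factorial := by
  classical
  rw [Nat.card_eq_fintype_card, Fintype.card_subtype]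
  set A := univ.filter fun p : Equiv.Perm (Fin n) × (Fin n → Bool) =>
    (∀ i j : Fin n, i < j → p.2 i = true → p.2 j = true → p.1 j < p.1 i) ∧
    (Finset.univ.filter fun i => p.2 i = true).card ≤ k with hA
  have step1 : A.card = ∑ S ∈ univ.powerset.filter (fun S : Finset (Fin n) => S.card ≤ k),
      n.choose S.card * (n - S.card).factorial := by
    rw [card_eq_sum_card_fiberwise
      (f := fun p : Equiv.Perm (Fin n) × (Fin n → Bool) => univ.filter fun i => p.2 i = true)
      (t := univ.powerset.filter fun S => S.card ≤ k)
      (by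
        intro p hp
        rw [Finset.mem_coe, hA, mem_filter] at hp
        exact mem_filter.mpr ⟨mem_powerset.mpr (subset_univ _), hp.2.2⟩)]
    refine Finset.sum_congr rfl fun S hS => ?_
    rw [mem_filter, mem_powerset] at hS
    rw [← card_decOn S]
    refine Finset.card_nbij' (fun p => p.1)
      (fun σ => (σ, fun i => decide (i ∈ S))) ?_ ?_ ?_ ?_
    · intro p hp
      rw [Finset.mem_coe, mem_filter, hA, mem_filter] at hp
      obtain ⟨⟨_, hcond, _⟩, hfib⟩ := hp
      have hmem : ∀ i : Fin n, i ∈ S ↔ p.2 i = true := by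
        intro i
        rw [← hfib]; simp
      refine mem_filter.mpr ⟨mem_univ _, fun i j hi hj hij => ?_⟩
      exact hcond i j hij ((hmem i).mp hi) ((hmem j).mp hj)
    · intro σ hσ
      rw [Finset.mem_coe, mem_filter] at hσ
      have hfib : (univ.filter fun i => decide (i ∈ S) = true) = S := by
        ext i; simp
      rw [Finset.mem_coe, mem_filter, hA, mem_filter]
      refine ⟨⟨mem_univ _, fun i j hij hi hj => ?_, ?_⟩, hfib⟩
      · exact hσ.2 i j (by simpa using hi) (by simpa using hj) hij
      · rw [hfib]; exact hS.2
    · intro p hp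
      rw [Finset.mem_coe, mem_filter] at hp
      have hfib := hp.2
      ext
      · rfl
      · rename_i i
        have hiff : (i ∈ S) ↔ (p.2 i = true) := by rw [← hfib]; simp
        simp only
        cases h : p.2 i <;> simp [hiff, h]
    · intro σ _
      rfl
  rw [step1]
  rw [Finset.sum_filter, Finset.powerset_card_disjiUnion]
  erw [Finset.sum_disjiUnion]
  have hinner : ∀ i ∈ Finset.range (Finset.univ (α := Fin n)).card.succ,
      (∑ S ∈ Finset.powersetCard i (univ : Finset (Fin n)),
        if S.card ≤ k then n.choose S.card * (n - S.card).factorial else 0) =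
      if i ≤ k then n.choose i * (n.choose i * (n - i).factorial) else 0 := by
    intro i _
    rw [Finset.sum_congr rfl (fun S hS => by
      rw [(mem_powersetCard.mp hS).2])]
    rw [Finset.sum_const, smul_eq_mul, Finset.card_powersetCard]
    simp only [card_univ, Fintype.card_fin]
    split <;> ring
  rw [Finset.sum_congr rfl hinner]
  rw [← Finset.sum_filter]
  have hrange : (Finset.range (Finset.univ (α := Fin n)).card.succ).filter (· ≤ k) =
      Finset.range (min k n + 1) := by
    ext i
    simp only [Finset.mem_filter, Finset.mem_range, card_univ, Fintype.card_fin]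
    omega
  rw [hrange]
  refine Finset.sum_congr rfl fun i _ => ?_
  ring
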